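/- Let ρ be a probability density on ℝⁿ and for s > 0 set ρ_s = ρ ∗ g_s, where g_s is the centered Gaussian density with covariance s·Id. Then for every x ∈ ℝⁿ and every unit vector θ, the second directional derivative satisfies ∂²_θ log ρ_s(x) = -s⁻¹ + s⁻² Var_{ν_x}(⟨y, θ⟩), where ν_x is the probability measure on ℝⁿ with density proportional to y ↦ ρ(y) exp(-|y - x|²/(2s)). In particular ∂²_θ log ρ_s(x) ≥ -s⁻¹. -/

import Mathlib

open Real Set MeasureTheory

lemma gauss_poly_bound (s : ℝ) (hs : 0 < s) (c₀ R : ℝ) (k : ℕ) :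
    ∃ C : ℝ, 0 ≤ C ∧ ∀ u r : ℝ, |r| ≤ R →
      |u| ^ k * Real.exp (-(u - c₀) ^ 2 / (2 * s) + r * (u / s)) ≤ C := by
  set A := |c₀| + R with hA
  refine ⟨Real.exp (A ^ 2 / s) * max 1 ((k.factorial : ℝ) * (4 * s) ^ k), by positivity, ?_⟩
  intro u r hr
  have h1 : -(u - c₀) ^ 2 / (2 * s) + r * (u / s) ≤ A ^ 2 / s - u ^ 2 / (4 * s) := by
    have hinv : (0:ℝ) < s⁻¹ := inv_pos.2 hs
    have hru : r * u ≤ R * |u| := by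
      calc r * u ≤ |r * u| := le_abs_self _
        _ = |r| * |u| := abs_mul _ _
        _ ≤ R * |u| := mul_le_mul_of_nonneg_right hr (abs_nonneg u)
    have hcu : c₀ * u ≤ |c₀| * |u| := le_trans (le_abs_self _) (le_of_eq (abs_mul _ _))
    have hP : 0 ≤ 4 * A ^ 2 + u ^ 2 - 4 * (c₀ * u) - 4 * (r * u) + 2 * c₀ ^ 2 := by
      rw [hA]
      nlinarith [sq_nonneg (|u| - 2 * (|c₀| + R)), sq_abs u, hru, hcu, sq_nonneg c₀]
    have e1 : -(u - c₀) ^ 2 / (2 * s) + r * (u / s) = (-(u - c₀) ^ 2 / 2 + r * u) * s⁻¹ := by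
      field_simp
    have e2 : A ^ 2 / s - u ^ 2 / (4 * s) = (A ^ 2 - u ^ 2 / 4) * s⁻¹ := by
      field_simp
    rw [e1, e2]
    apply mul_le_mul_of_nonneg_right _ hinv.le
    rw [hA] at hP ⊢
    nlinarith [hP]
  refine le_trans (mul_le_mul_of_nonneg_left (Real.exp_le_exp.2 h1)
    (pow_nonneg (abs_nonneg u) k)) ?_
  rw [show A ^ 2 / s - u ^ 2 / (4 * s) = A ^ 2 / s + -(u ^ 2 / (4 * s)) by ring, Real.exp_add,
    ← mul_assoc, mul_comm (|u| ^ k) (Real.exp (A ^ 2 / s)), mul_assoc]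
  apply mul_le_mul_of_nonneg_left _ (Real.exp_pos _).le
  rcases le_total |u| 1 with h | h
  · refine le_trans ?_ (le_max_left _ _)
    have h2 : Real.exp (-(u ^ 2 / (4 * s))) ≤ 1 := Real.exp_le_one_iff.2 (neg_nonpos.2 (by positivity))
    have h3 : |u| ^ k ≤ 1 := pow_le_one₀ (abs_nonneg u) h
    calc |u| ^ k * Real.exp (-(u ^ 2 / (4 * s))) ≤ 1 * 1 :=
          mul_le_mul h3 h2 (Real.exp_pos _).le zero_le_one
      _ = 1 := one_mul 1
  · refine le_trans ?_ (le_max_right _ _)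
    have hx : (0:ℝ) ≤ u ^ 2 / (4 * s) := by positivity
    have hfac : (u ^ 2 / (4 * s)) ^ k ≤ (k.factorial : ℝ) * Real.exp (u ^ 2 / (4 * s)) := by
      have hsum := Real.sum_le_exp_of_nonneg hx (k + 1)
      have hterm : (u ^ 2 / (4 * s)) ^ k / (k.factorial : ℝ) ≤
          ∑ i ∈ Finset.range (k + 1), (u ^ 2 / (4 * s)) ^ i / (i.factorial : ℝ) :=
        Finset.single_le_sum (f := fun i => (u ^ 2 / (4 * s)) ^ i / (i.factorial : ℝ)) (fun i _ => by positivity) (Finset.self_mem_range_succ k)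
      have h4 := hterm.trans hsum
      rw [div_le_iff₀ (by positivity : (0:ℝ) < (k.factorial : ℝ))] at h4
      linarith [h4]
    have h1k : (1:ℝ) ≤ |u| ^ k := one_le_pow₀ h
    have huk : |u| ^ k ≤ (u ^ 2) ^ k := by
      have e : (u ^ 2) ^ k = |u| ^ k * |u| ^ k := by rw [← sq_abs]; ring
      rw [e]
      exact le_mul_of_one_le_left (pow_nonneg (abs_nonneg u) k) h1k
    calc |u| ^ k * Real.exp (-(u ^ 2 / (4 * s)))
        ≤ (u ^ 2) ^ k * Real.exp (-(u ^ 2 / (4 * s))) := by gcongr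
      _ = (u ^ 2 / (4 * s)) ^ k * (4 * s) ^ k * Real.exp (-(u ^ 2 / (4 * s))) := by
          rw [div_pow, div_mul_cancel₀]
          positivity
      _ ≤ ((k.factorial : ℝ) * Real.exp (u ^ 2 / (4 * s))) * (4 * s) ^ k *
            Real.exp (-(u ^ 2 / (4 * s))) := by gcongr
      _ = (k.factorial : ℝ) * (4 * s) ^ k *
            (Real.exp (u ^ 2 / (4 * s)) * Real.exp (-(u ^ 2 / (4 * s)))) := by ring
      _ = (k.factorial : ℝ) * (4 * s) ^ k := by
          rw [← Real.exp_add, add_neg_cancel, Real.exp_zero, mul_one]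

noncomputable def Gk {n : ℕ} (ρ : EuclideanSpace ℝ (Fin n) → ℝ) (s : ℝ)
    (x θ : EuclideanSpace ℝ (Fin n)) (k : ℕ) (r : ℝ) (y : EuclideanSpace ℝ (Fin n)) : ℝ :=
  (ρ y * Real.exp (-‖y - x‖ ^ 2 / (2 * s))) *
    (((inner ℝ y θ : ℝ) / s) ^ k * Real.exp (r * ((inner ℝ y θ : ℝ) / s)))

lemma Gk_hasDerivAt {n : ℕ} (ρ : EuclideanSpace ℝ (Fin n) → ℝ) (s : ℝ)
    (x θ : EuclideanSpace ℝ (Fin n)) (k : ℕ) (r : ℝ) (y : EuclideanSpace ℝ (Fin n)) :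
    HasDerivAt (fun t => Gk ρ s x θ k t y) (Gk ρ s x θ (k + 1) r y) r := by
  have h0 : HasDerivAt (fun t : ℝ => Real.exp (t * ((inner ℝ y θ : ℝ) / s)))
      (((inner ℝ y θ : ℝ) / s) * Real.exp (r * ((inner ℝ y θ : ℝ) / s))) r := by
    simpa [mul_comm] using ((hasDerivAt_id r).mul_const ((inner ℝ y θ : ℝ) / s)).exp
  have h1 := h0.const_mul
    ((ρ y * Real.exp (-‖y - x‖ ^ 2 / (2 * s))) * ((inner ℝ y θ : ℝ) / s) ^ k)
  have hfun : (fun t => Gk ρ s x θ k t y) =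
      fun t => ((ρ y * Real.exp (-‖y - x‖ ^ 2 / (2 * s))) * ((inner ℝ y θ : ℝ) / s) ^ k) *
        Real.exp (t * ((inner ℝ y θ : ℝ) / s)) := by
    funext t; simp only [Gk]; ring
  have hval : Gk ρ s x θ (k + 1) r y =
      ((ρ y * Real.exp (-‖y - x‖ ^ 2 / (2 * s))) * ((inner ℝ y θ : ℝ) / s) ^ k) *
        (((inner ℝ y θ : ℝ) / s) * Real.exp (r * ((inner ℝ y θ : ℝ) / s))) := by
    simp only [Gk, pow_succ]; ring
  rw [hfun, hval]; exact h1

lemma Gk_meas {n : ℕ} {ρ : EuclideanSpace ℝ (Fin n) → ℝ} (hρmeas : Measurable ρ) (s : ℝ)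
    (x θ : EuclideanSpace ℝ (Fin n)) (k : ℕ) (r : ℝ) :
    Measurable (fun y => Gk ρ s x θ k r y) := by
  have hc1 : Continuous fun y : EuclideanSpace ℝ (Fin n) =>
      Real.exp (-‖y - x‖ ^ 2 / (2 * s)) := by fun_prop
  have hu : Continuous fun y : EuclideanSpace ℝ (Fin n) => (inner ℝ y θ : ℝ) :=
    continuous_id.inner continuous_const
  have hc2 : Continuous fun y : EuclideanSpace ℝ (Fin n) =>
      ((inner ℝ y θ : ℝ) / s) ^ k * Real.exp (r * ((inner ℝ y θ : ℝ) / s)) := by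
    exact ((hu.div_const s).pow k).mul (Real.continuous_exp.comp (continuous_const.mul (hu.div_const s)))
  exact (hρmeas.mul hc1.measurable).mul hc2.measurable

lemma Gk_bound {n : ℕ} {ρ : EuclideanSpace ℝ (Fin n) → ℝ} (hρpos : ∀ y, 0 < ρ y)
    {s : ℝ} (hs : 0 < s) (x : EuclideanSpace ℝ (Fin n)) {θ : EuclideanSpace ℝ (Fin n)}
    (hθ : ‖θ‖ = 1) (k : ℕ) (R : ℝ) :
    ∃ C : ℝ, 0 ≤ C ∧ ∀ r : ℝ, |r| ≤ R → ∀ y, ‖Gk ρ s x θ k r y‖ ≤ ρ y * C := by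
  obtain ⟨C₀, hC₀, hC⟩ := gauss_poly_bound s hs (inner ℝ x θ : ℝ) R k
  refine ⟨C₀ / s ^ k, by positivity, fun r hr y => ?_⟩
  have hsq : ((inner ℝ y θ : ℝ) - (inner ℝ x θ : ℝ)) ^ 2 ≤ ‖y - x‖ ^ 2 := by
    have h1 : (inner ℝ y θ : ℝ) - (inner ℝ x θ : ℝ) = (inner ℝ (y - x) θ : ℝ) :=
      (inner_sub_left _ _ _).symm
    have h2 : |(inner ℝ (y - x) θ : ℝ)| ≤ ‖y - x‖ := by
      calc |(inner ℝ (y - x) θ : ℝ)| ≤ ‖y - x‖ * ‖θ‖ := abs_real_inner_le_norm _ _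
        _ = ‖y - x‖ := by rw [hθ, mul_one]
    calc ((inner ℝ y θ : ℝ) - (inner ℝ x θ : ℝ)) ^ 2 = |(inner ℝ (y - x) θ : ℝ)| ^ 2 := by
          rw [h1, sq_abs]
      _ ≤ ‖y - x‖ ^ 2 := by gcongr
  have e1 : ‖Gk ρ s x θ k r y‖ = (ρ y / s ^ k) *
      (|(inner ℝ y θ : ℝ)| ^ k *
        Real.exp (-‖y - x‖ ^ 2 / (2 * s) + r * ((inner ℝ y θ : ℝ) / s))) := by
    have : |((inner ℝ y θ : ℝ) / s) ^ k| = |(inner ℝ y θ : ℝ)| ^ k / s ^ k := by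
      rw [abs_pow, abs_div, abs_of_pos hs, div_pow]
    rw [Real.norm_eq_abs, Gk, abs_mul, abs_mul, abs_mul, this, Real.abs_exp, Real.abs_exp,
      abs_of_pos (hρpos y), Real.exp_add]
    ring
  rw [e1]
  have hexp : |(inner ℝ y θ : ℝ)| ^ k *
        Real.exp (-‖y - x‖ ^ 2 / (2 * s) + r * ((inner ℝ y θ : ℝ) / s)) ≤ C₀ := by
    refine le_trans ?_ (hC (inner ℝ y θ : ℝ) r hr)
    have hmono : -‖y - x‖ ^ 2 / (2 * s) + r * ((inner ℝ y θ : ℝ) / s) ≤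
        -((inner ℝ y θ : ℝ) - (inner ℝ x θ : ℝ)) ^ 2 / (2 * s) + r * ((inner ℝ y θ : ℝ) / s) := by
      gcongr
    exact mul_le_mul_of_nonneg_left (Real.exp_le_exp.2 hmono) (by positivity)
  calc (ρ y / s ^ k) *
      (|(inner ℝ y θ : ℝ)| ^ k *
        Real.exp (-‖y - x‖ ^ 2 / (2 * s) + r * ((inner ℝ y θ : ℝ) / s)))
      ≤ (ρ y / s ^ k) * C₀ := by
        apply mul_le_mul_of_nonneg_left hexp (div_nonneg (hρpos y).le (by positivity))
    _ = ρ y * (C₀ / s ^ k) := by ring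

/-- The second derivative of a function along the direction `θ`, at the point `x`. -/
noncomputable def dirDeriv2 {E : Type*} [NormedAddCommGroup E] [NormedSpace ℝ E]
    (g : E → ℝ) (x θ : E) : ℝ :=
  iteratedDeriv 2 (fun r : ℝ => g (x + r • θ)) 0

/-- Paper Lemma 4.1, formula (par): for a (log-concave) probability density `ρ` on `ℝⁿ` and
`s > 0`, the Gaussian convolution `ρ_s = ρ ∗ g_s` satisfies, for every `x` and every unit
vector `θ`, `∂²_θ log ρ_s(x) = -s⁻¹ + s⁻² Var_{ν_x}(⟨y, θ⟩)` where `ν_x` has density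
proportional to `y ↦ ρ(y) exp(-|y-x|²/(2s))`; in particular `∂²_θ log ρ_s(x) ≥ -s⁻¹`. -/
theorem second_dir_deriv_log_gaussian_convolution {n : ℕ}
    (ρ : EuclideanSpace ℝ (Fin n) → ℝ) (hρmeas : Measurable ρ) (hρpos : ∀ x, 0 < ρ x)
    (hρ1 : ∫ x, ρ x = 1)
    -- log-concavity, justifying differentiation under the integral sign
    (hlc : ∀ x y : EuclideanSpace ℝ (Fin n), ∀ a b : ℝ, 0 ≤ a → 0 ≤ b → a + b = 1 →
      (ρ x) ^ a * (ρ y) ^ b ≤ ρ (a • x + b • y))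
    (s : ℝ) (hs : 0 < s)
    (ρs : EuclideanSpace ℝ (Fin n) → ℝ)
    (hρs : ∀ x, ρs x = (2 * π * s) ^ (-(n : ℝ) / 2) *
      ∫ y, ρ y * Real.exp (-‖y - x‖ ^ 2 / (2 * s)))
    (x θ : EuclideanSpace ℝ (Fin n)) (hθ : ‖θ‖ = 1) :
    (dirDeriv2 (fun z => Real.log (ρs z)) x θ =
        -s⁻¹ + s⁻¹ ^ 2 *
          ((∫ y, (inner ℝ y θ : ℝ) ^ 2 * (ρ y * Real.exp (-‖y - x‖ ^ 2 / (2 * s)))) /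
              (∫ y, ρ y * Real.exp (-‖y - x‖ ^ 2 / (2 * s)))
            - ((∫ y, (inner ℝ y θ : ℝ) * (ρ y * Real.exp (-‖y - x‖ ^ 2 / (2 * s)))) /
                (∫ y, ρ y * Real.exp (-‖y - x‖ ^ 2 / (2 * s)))) ^ 2)) ∧
      -s⁻¹ ≤ dirDeriv2 (fun z => Real.log (ρs z)) x θ := by
  have hρint : Integrable ρ := by
    by_contra h
    rw [integral_undef h] at hρ1
    exact one_ne_zero hρ1.symm
  have hInt : ∀ (k : ℕ) (r : ℝ), Integrable (fun y => Gk ρ s x θ k r y) := by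
    intro k r
    obtain ⟨C, hC0, hC⟩ := Gk_bound hρpos hs x hθ k |r|
    exact (hρint.mul_const C).mono' (Gk_meas hρmeas s x θ k r).aestronglyMeasurable
      (Filter.Eventually.of_forall fun y => hC r le_rfl y)
  have hDeriv : ∀ (k : ℕ) (r₀ : ℝ),
      HasDerivAt (fun r => ∫ y, Gk ρ s x θ k r y) (∫ y, Gk ρ s x θ (k + 1) r₀ y) r₀ := by
    intro k r₀
    obtain ⟨C, hC0, hC⟩ := Gk_bound hρpos hs x hθ (k + 1) (|r₀| + 1)
    refine (hasDerivAt_integral_of_dominated_loc_of_deriv_le (s := Metric.ball r₀ 1) (Metric.ball_mem_nhds r₀ one_pos)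
      (Filter.Eventually.of_forall fun r => (Gk_meas hρmeas s x θ k r).aestronglyMeasurable)
      (hInt k r₀) (Gk_meas hρmeas s x θ (k + 1) r₀).aestronglyMeasurable
      (Filter.Eventually.of_forall fun y r hr => hC r ?_ y) (hρint.mul_const C)
      (Filter.Eventually.of_forall fun y r _ => Gk_hasDerivAt ρ s x θ k r y)).2
    rw [Metric.mem_ball, Real.dist_eq] at hr
    have := abs_sub_abs_le_abs_sub r r₀
    linarith
  have hNpos : ∀ r, 0 < ∫ y, Gk ρ s x θ 0 r y := by
    intro r
    have hpos : ∀ y, 0 < Gk ρ s x θ 0 r y := fun y => by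
      simp only [Gk, pow_zero, one_mul]
      exact mul_pos (mul_pos (hρpos y) (Real.exp_pos _)) (Real.exp_pos _)
    refine (integral_pos_iff_support_of_nonneg (fun y => (hpos y).le) (hInt 0 r)).2 ?_
    have hsup : Function.support (fun y => Gk ρ s x θ 0 r y) = Set.univ :=
      Set.eq_univ_of_forall fun y => (hpos y).ne'
    rw [hsup]
    exact isOpen_univ.measure_pos volume univ_nonempty
  have hc : (0:ℝ) < (2 * π * s) ^ (-(n : ℝ) / 2) :=
    Real.rpow_pos_of_pos (by positivity) _
  -- decomposition of the function r ↦ log ρs (x + r θ)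
  have hgL : (fun r : ℝ => Real.log (ρs (x + r • θ))) =
      fun r => (Real.log ((2 * π * s) ^ (-(n : ℝ) / 2)) +
        (-((inner ℝ x θ : ℝ) / s) * r - r ^ 2 / (2 * s))) +
          Real.log (∫ y, Gk ρ s x θ 0 r y) := by
    funext r
    have hpt : ∀ y : EuclideanSpace ℝ (Fin n),
        ρ y * Real.exp (-‖y - (x + r • θ)‖ ^ 2 / (2 * s)) =
          Real.exp (-((inner ℝ x θ : ℝ) / s) * r - r ^ 2 / (2 * s)) * Gk ρ s x θ 0 r y := by
      intro y
      have hnorm : ‖y - (x + r • θ)‖ ^ 2 =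
          ‖y - x‖ ^ 2 - 2 * (r * ((inner ℝ y θ : ℝ) - (inner ℝ x θ : ℝ))) + r ^ 2 := by
        have h1 : y - (x + r • θ) = (y - x) - r • θ := by
          rw [sub_add_eq_sub_sub]
        rw [h1, norm_sub_sq_real, real_inner_smul_right, inner_sub_left, norm_smul,
          Real.norm_eq_abs, hθ, mul_one, sq_abs]
      simp only [Gk, pow_zero, one_mul]
      rw [show Real.exp (-((inner ℝ x θ : ℝ) / s) * r - r ^ 2 / (2 * s)) *
            (ρ y * Real.exp (-‖y - x‖ ^ 2 / (2 * s)) * Real.exp (r * ((inner ℝ y θ : ℝ) / s))) =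
          ρ y * Real.exp ((-((inner ℝ x θ : ℝ) / s) * r - r ^ 2 / (2 * s)) +
            (-‖y - x‖ ^ 2 / (2 * s) + r * ((inner ℝ y θ : ℝ) / s)))
        from by rw [Real.exp_add, Real.exp_add]; ring]
      congr 1
      rw [hnorm]
      field_simp
      ring
    rw [hρs]
    simp only [hpt]
    rw [integral_const_mul, Real.log_mul hc.ne' (mul_pos (Real.exp_pos _) (hNpos r)).ne',
      Real.log_mul (Real.exp_pos _).ne' (hNpos r).ne', Real.log_exp]
    ring
  -- first derivative
  have hD1 : ∀ r : ℝ, HasDerivAt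
      (fun r => (Real.log ((2 * π * s) ^ (-(n : ℝ) / 2)) +
        (-((inner ℝ x θ : ℝ) / s) * r - r ^ 2 / (2 * s))) +
          Real.log (∫ y, Gk ρ s x θ 0 r y))
      ((-((inner ℝ x θ : ℝ) / s) - r / s) +
        (∫ y, Gk ρ s x θ 1 r y) / (∫ y, Gk ρ s x θ 0 r y)) r := by
    intro r
    have ha := (hasDerivAt_id r).const_mul (-((inner ℝ x θ : ℝ) / s))
    have hb := (hasDerivAt_pow 2 r).div_const (2 * s)
    have h1 := (ha.sub hb).const_add (Real.log ((2 * π * s) ^ (-(n : ℝ) / 2)))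
    have h2 := (hDeriv 0 r).log (hNpos r).ne'
    have h3 := h1.add h2
    refine h3.congr_deriv ?_
    have : (2 : ℕ) • r ^ 1 = 2 * r := by simp
    field_simp
    ring
  -- second derivative at 0
  have hD2 : HasDerivAt
      (fun r => (-((inner ℝ x θ : ℝ) / s) - r / s) +
        (∫ y, Gk ρ s x θ 1 r y) / (∫ y, Gk ρ s x θ 0 r y))
      (-(1 / s) + ((∫ y, Gk ρ s x θ 2 0 y) * (∫ y, Gk ρ s x θ 0 0 y) -
        (∫ y, Gk ρ s x θ 1 0 y) * (∫ y, Gk ρ s x θ 1 0 y)) /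
          (∫ y, Gk ρ s x θ 0 0 y) ^ 2) 0 := by
    have ha : HasDerivAt (fun r : ℝ => -((inner ℝ x θ : ℝ) / s) - r / s) (-(1 / s)) 0 := by
      have := ((hasDerivAt_id (0:ℝ)).div_const s).const_sub (-((inner ℝ x θ : ℝ) / s))
      simpa using this
    have hb := (hDeriv 1 0).div (hDeriv 0 0) (hNpos 0).ne'
    exact ha.add hb
  have hval : dirDeriv2 (fun z => Real.log (ρs z)) x θ =
      -(1 / s) + ((∫ y, Gk ρ s x θ 2 0 y) * (∫ y, Gk ρ s x θ 0 0 y) -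
        (∫ y, Gk ρ s x θ 1 0 y) * (∫ y, Gk ρ s x θ 1 0 y)) /
          (∫ y, Gk ρ s x θ 0 0 y) ^ 2 := by
    have hderiv_eq : deriv (fun r : ℝ => Real.log (ρs (x + r • θ))) =
        fun r => (-((inner ℝ x θ : ℝ) / s) - r / s) +
          (∫ y, Gk ρ s x θ 1 r y) / (∫ y, Gk ρ s x θ 0 r y) := by
      rw [hgL]
      funext r
      exact (hD1 r).deriv
    have : dirDeriv2 (fun z => Real.log (ρs z)) x θ =
        deriv (deriv (fun r : ℝ => Real.log (ρs (x + r • θ)))) 0 := by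
      rw [dirDeriv2, show (2:ℕ) = 1 + 1 from rfl, iteratedDeriv_succ, iteratedDeriv_one]
    rw [this, hderiv_eq]
    exact hD2.deriv
  -- identify the integrals
  have hG0 : (∫ y, Gk ρ s x θ 0 0 y) = ∫ y, ρ y * Real.exp (-‖y - x‖ ^ 2 / (2 * s)) := by
    simp only [Gk, pow_zero, one_mul, zero_mul, Real.exp_zero, mul_one]
  have hG1 : (∫ y, Gk ρ s x θ 1 0 y) =
      (∫ y, (inner ℝ y θ : ℝ) * (ρ y * Real.exp (-‖y - x‖ ^ 2 / (2 * s)))) * s⁻¹ := by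
    rw [← integral_mul_const]
    refine integral_congr_ae (Filter.Eventually.of_forall fun y => ?_)
    simp only [Gk, pow_one, zero_mul, Real.exp_zero, mul_one]
    ring
  have hG2 : (∫ y, Gk ρ s x θ 2 0 y) =
      (∫ y, (inner ℝ y θ : ℝ) ^ 2 * (ρ y * Real.exp (-‖y - x‖ ^ 2 / (2 * s)))) * s⁻¹ ^ 2 := by
    rw [← integral_mul_const]
    refine integral_congr_ae (Filter.Eventually.of_forall fun y => ?_)
    simp only [Gk, zero_mul, Real.exp_zero, mul_one]
    ring
  have hI0pos : 0 < ∫ y, ρ y * Real.exp (-‖y - x‖ ^ 2 / (2 * s)) := hG0 ▸ hNpos 0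
  set I0 := ∫ y, ρ y * Real.exp (-‖y - x‖ ^ 2 / (2 * s)) with hI0
  set J1 := ∫ y, (inner ℝ y θ : ℝ) * (ρ y * Real.exp (-‖y - x‖ ^ 2 / (2 * s))) with hJ1
  set J2 := ∫ y, (inner ℝ y θ : ℝ) ^ 2 * (ρ y * Real.exp (-‖y - x‖ ^ 2 / (2 * s))) with hJ2
  -- integrability of the moment integrands
  have hintf : Integrable (fun y => ρ y * Real.exp (-‖y - x‖ ^ 2 / (2 * s))) :=
    (hInt 0 0).congr (Filter.Eventually.of_forall fun y => by
      simp only [Gk, pow_zero, one_mul, zero_mul, Real.exp_zero, mul_one])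
  have hintuf : Integrable (fun y =>
      (inner ℝ y θ : ℝ) * (ρ y * Real.exp (-‖y - x‖ ^ 2 / (2 * s)))) := by
    refine ((hInt 1 0).mul_const s).congr (Filter.Eventually.of_forall fun y => ?_)
    simp only [Gk, pow_one, zero_mul, Real.exp_zero, mul_one]
    field_simp
  have hintu2f : Integrable (fun y =>
      (inner ℝ y θ : ℝ) ^ 2 * (ρ y * Real.exp (-‖y - x‖ ^ 2 / (2 * s)))) := by
    refine ((hInt 2 0).mul_const (s ^ 2)).congr (Filter.Eventually.of_forall fun y => ?_)
    simp only [Gk, zero_mul, Real.exp_zero, mul_one]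
    field_simp
  -- the variance is nonnegative
  have hVar : 0 ≤ J2 / I0 - (J1 / I0) ^ 2 := by
    have hmean : 0 ≤ ∫ y, ((inner ℝ y θ : ℝ) - J1 / I0) ^ 2 *
        (ρ y * Real.exp (-‖y - x‖ ^ 2 / (2 * s))) :=
      integral_nonneg fun y => mul_nonneg (sq_nonneg _)
        (mul_nonneg (hρpos y).le (Real.exp_pos _).le)
    have hexpand : (fun y => ((inner ℝ y θ : ℝ) - J1 / I0) ^ 2 *
          (ρ y * Real.exp (-‖y - x‖ ^ 2 / (2 * s)))) =
        fun y => (inner ℝ y θ : ℝ) ^ 2 * (ρ y * Real.exp (-‖y - x‖ ^ 2 / (2 * s))) +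
          ((-(2 * (J1 / I0))) * ((inner ℝ y θ : ℝ) * (ρ y * Real.exp (-‖y - x‖ ^ 2 / (2 * s)))) +
            (J1 / I0) ^ 2 * (ρ y * Real.exp (-‖y - x‖ ^ 2 / (2 * s)))) := by
      funext y; ring
    have hsum2 : Integrable (fun y =>
        (-(2 * (J1 / I0))) * ((inner ℝ y θ : ℝ) * (ρ y * Real.exp (-‖y - x‖ ^ 2 / (2 * s)))) +
          (J1 / I0) ^ 2 * (ρ y * Real.exp (-‖y - x‖ ^ 2 / (2 * s)))) :=
      (hintuf.const_mul _).add (hintf.const_mul _)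
    rw [hexpand, integral_add hintu2f hsum2,
      integral_add (hintuf.const_mul _) (hintf.const_mul _),
      integral_const_mul, integral_const_mul, ← hI0, ← hJ1, ← hJ2] at hmean
    have hkey : 0 ≤ J2 - J1 ^ 2 / I0 := by
      have he : J2 + (-(2 * (J1 / I0)) * J1 + (J1 / I0) ^ 2 * I0) = J2 - J1 ^ 2 / I0 := by
        field_simp
        ring
      linarith [hmean, he.le, he.symm.le]
    have he2 : J2 / I0 - (J1 / I0) ^ 2 = (J2 - J1 ^ 2 / I0) / I0 := by
      field_simp
    rw [he2]
    exact div_nonneg hkey hI0pos.le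
  have heq : dirDeriv2 (fun z => Real.log (ρs z)) x θ =
      -s⁻¹ + s⁻¹ ^ 2 * (J2 / I0 - (J1 / I0) ^ 2) := by
    rw [hval, hG0, hG1, hG2]
    field_simp
  refine ⟨heq, ?_⟩
  rw [heq]
  have := mul_nonneg (sq_nonneg s⁻¹) hVar
  linarith
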